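/- arXiv:2507.02421 — 2 statements merged into one kernel-verified Lean document; each statement's English description precedes it below -/
import Mathlib

section
/- Let n ≥ 2 and let P_n be the path graph with vertices v_1, …, v_n. Then the adjacency matrix A_{(P_n, {v_1, v_n})} of the graft whose mark set consists of the two leaves has rank n − 1 over GF(2); equivalently, its corank equals 1. -/
open scoped Classical symmDiff

/-- Local complementation of a simple graph at a vertex `v`: toggle the adjacency
between every pair of distinct neighbours of `v`. -/
def SimpleGraph.localComp {V : Type*} (G : SimpleGraph V) (v : V) : SimpleGraph V where
  Adj u w := u ≠ w ∧ (Xor' (G.Adj u w) (G.Adj v u ∧ G.Adj v w))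
  symm := by
    constructor
    rintro u w ⟨h1, h2⟩
    refine ⟨h1.symm, ?_⟩
    rw [G.adj_comm w u, and_comm]
    exact h2
  loopless := ⟨fun u h => h.1 rfl⟩

/-- Local complementation deletion `G ⊟ v`, keeping the ambient vertex type
(the deleted vertex becomes isolated). -/
def SimpleGraph.lcdel {V : Type*} (G : SimpleGraph V) (v : V) : SimpleGraph V where
  Adj u w := u ≠ v ∧ w ≠ v ∧ (G.localComp v).Adj u w
  symm := ⟨fun u w h => ⟨h.2.1, h.1, (G.localComp v).adj_symm h.2.2⟩⟩
  loopless := ⟨fun u h => (G.localComp v).irrefl h.2.2⟩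

/-- A graft: a simple graph whose edges lie inside a finite support, together with
a marked set of vertices `L ⊆ support`. -/
structure Graft (V : Type*) where
  support : Finset V
  G : SimpleGraph V
  edge_mem : ∀ ⦃u w : V⦄, G.Adj u w → u ∈ support
  L : Finset V
  L_sub : L ⊆ support

variable {V : Type*} [Fintype V] [DecidableEq V]

/-- Local complementation deletion of a graft at a vertex:
`(G, L) ⊟ v = (G ⊟ v, (L \ {v}) ∆ N_G(v))`. -/
noncomputable def Graft.lcd (Γ : Graft V) (v : V) : Graft V where
  support := Γ.support.erase v
  G := Γ.G.lcdel v
  edge_mem := by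
    intro u w h
    change u ≠ v ∧ w ≠ v ∧ u ≠ w ∧ Xor' (Γ.G.Adj u w) (Γ.G.Adj v u ∧ Γ.G.Adj v w) at h
    obtain ⟨hu, hw, hne, hx⟩ := h
    refine Finset.mem_erase.mpr ⟨hu, ?_⟩
    rcases (hx : (Γ.G.Adj u w ∧ ¬(Γ.G.Adj v u ∧ Γ.G.Adj v w)) ∨
        ((Γ.G.Adj v u ∧ Γ.G.Adj v w) ∧ ¬Γ.G.Adj u w)) with ⟨ha, -⟩ | ⟨⟨hv1, -⟩, -⟩
    · exact Γ.edge_mem ha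
    · exact Γ.edge_mem (Γ.G.adj_symm hv1)
  L := (Γ.L.erase v) ∆ (Finset.univ.filter fun u => Γ.G.Adj v u)
  L_sub := by
    intro u hu
    rw [Finset.mem_symmDiff] at hu
    refine Finset.mem_erase.mpr ?_
    rcases hu with ⟨h1, -⟩ | ⟨h2, -⟩
    · exact ⟨(Finset.mem_erase.mp h1).1, Γ.L_sub (Finset.mem_erase.mp h1).2⟩
    · have hadj : Γ.G.Adj v u := (Finset.mem_filter.mp h2).2
      exact ⟨fun h => Γ.G.irrefl (h ▸ hadj), Γ.edge_mem (Γ.G.adj_symm hadj)⟩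

/-- `Δ` is a local complementation minor of `Γ`: it is obtained from `Γ` by a
finite sequence of local complementation deletions, each performed at a vertex
of the current mark set. -/
inductive Graft.IsLCMinor : Graft V → Graft V → Prop
  | refl (Γ : Graft V) : Graft.IsLCMinor Γ Γ
  | step {Γ Δ : Graft V} (v : V) (hv : v ∈ Γ.L) :
      Graft.IsLCMinor (Γ.lcd v) Δ → Graft.IsLCMinor Γ Δ

/-- The adjacency matrix over GF(2) of a graft, indexed by its support. -/
noncomputable def Graft.matrix (Γ : Graft V) :
    Matrix Γ.support Γ.support (ZMod 2) := fun u w =>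
  if (u : V) = (w : V) then (if (u : V) ∈ Γ.L then 1 else 0)
  else (if Γ.G.Adj (u : V) (w : V) then 1 else 0)

/-- The corank over GF(2) of the adjacency matrix of a graft. -/
noncomputable def Graft.corank (Γ : Graft V) : ℕ :=
  Γ.support.card - Γ.matrix.rank

/-- The graft on the path graph `P_n` (full support) with mark set `L`. -/
noncomputable def pathGraft (n : ℕ) (L : Finset (Fin n)) : Graft (Fin n) :=
  ⟨Finset.univ, SimpleGraph.pathGraph n, fun u _ _ => Finset.mem_univ u, L,
    Finset.subset_univ L⟩


noncomputable def pm (n : ℕ) : Matrix (Fin n) (Fin n) (ZMod 2) := fun i j =>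
  if i = j then (if i.val = 0 ∨ i.val = n - 1 then 1 else 0)
  else if i.val + 1 = j.val ∨ j.val + 1 = i.val then 1 else 0

lemma zmod2_add_eq_zero {a b : ZMod 2} (h : a + b = 0) : b = a := by
  revert a b; decide

lemma pm_row (n : ℕ) (x : Fin n → ZMod 2) (a b k : ℕ)
    (ha : a < n) (hb : b < n) (hk : k < n) (hab : a ≠ b)
    (h1 : pm n ⟨k, hk⟩ ⟨a, ha⟩ = 1) (h2 : pm n ⟨k, hk⟩ ⟨b, hb⟩ = 1)
    (hrest : ∀ j : Fin n, j.val ≠ a → j.val ≠ b → pm n ⟨k, hk⟩ j = 0) :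
    (pm n).mulVec x ⟨k, hk⟩ = x ⟨a, ha⟩ + x ⟨b, hb⟩ := by
  have hne : (⟨a, ha⟩ : Fin n) ≠ ⟨b, hb⟩ := by simp [Fin.ext_iff, hab]
  have key : ∑ j ∈ ({⟨a, ha⟩, ⟨b, hb⟩} : Finset (Fin n)), pm n ⟨k, hk⟩ j * x j
      = ∑ j : Fin n, pm n ⟨k, hk⟩ j * x j := by
    refine Finset.sum_subset (Finset.subset_univ _) ?_
    intro j _ hj
    simp only [Finset.mem_insert, Finset.mem_singleton] at hj
    push_neg at hj
    have := hrest j (fun h => hj.1 (by simp [Fin.ext_iff, h])) (fun h => hj.2 (by simp [Fin.ext_iff, h]))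
    simp [this]
  rw [Matrix.mulVec, dotProduct, ← key, Finset.sum_pair hne, h1, h2, one_mul, one_mul]

lemma pm_row0 (n : ℕ) (hn : 2 ≤ n) (x : Fin n → ZMod 2) :
    (pm n).mulVec x ⟨0, by have _ := x; omega⟩ = x ⟨0, by have _ := x; omega⟩ + x ⟨1, by have _ := x; omega⟩ := by
  refine pm_row n x 0 1 0 (by omega) (by omega) (by omega) (by omega) ?_ ?_ ?_
  · simp [pm]
  · simp [pm, Fin.ext_iff]
  · intro j h0 h1
    simp only [pm, Fin.ext_iff]
    rw [if_neg (by simpa using fun h => h0 h.symm), if_neg (by omega)]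

lemma pm_rowmid (n : ℕ) (x : Fin n → ZMod 2) (k : ℕ) (hk1 : 1 ≤ k) (hk2 : k + 1 ≤ n - 1) :
    (pm n).mulVec x ⟨k, by omega⟩ = x ⟨k - 1, by omega⟩ + x ⟨k + 1, by omega⟩ := by
  refine pm_row n x (k - 1) (k + 1) k (by omega) (by omega) (by omega) (by omega) ?_ ?_ ?_
  · simp only [pm, Fin.ext_iff]
    rw [if_neg (by omega), if_pos (by omega)]
  · simp only [pm, Fin.ext_iff]
    rw [if_neg (by omega), if_pos (by first | omega | simp)]
  · intro j ha hb
    simp only [pm, Fin.ext_iff]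
    by_cases hjk : (k : ℕ) = j.val
    · rw [if_pos hjk, if_neg (by omega)]
    · rw [if_neg hjk, if_neg (by omega)]

lemma pm_rowlast (n : ℕ) (hn : 2 ≤ n) (x : Fin n → ZMod 2) :
    (pm n).mulVec x ⟨n - 1, by have _ := x; omega⟩ = x ⟨n - 2, by have _ := x; omega⟩ + x ⟨n - 1, by have _ := x; omega⟩ := by
  refine pm_row n x (n - 2) (n - 1) (n - 1) (by omega) (by omega) (by omega) (by omega) ?_ ?_ ?_
  · simp only [pm, Fin.ext_iff]
    rw [if_neg (by omega), if_pos (by omega)]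
  · simp only [pm, Fin.ext_iff]
    rw [if_pos (by first | omega | simp), if_pos (by first | omega | simp)]
  · intro j ha hb
    simp only [pm, Fin.ext_iff]
    rw [if_neg (by omega), if_neg (by omega)]

lemma pm_const_of_mulVec_zero (n : ℕ) (hn : 2 ≤ n) (x : Fin n → ZMod 2)
    (hx : (pm n).mulVec x = 0) :
    ∀ k, ∀ hk : k < n, x ⟨k, hk⟩ = x ⟨0, by have _ := x; omega⟩ := by
  intro k
  induction k using Nat.strong_induction_on with
  | _ k ih =>
    intro hk
    match k, hk with
    | 0, hk => rfl
    | 1, hk =>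
      have h0 := congrFun hx ⟨0, by omega⟩
      rw [pm_row0 n hn x] at h0
      simpa using zmod2_add_eq_zero h0
    | (m+2), hk =>
      have h0 := congrFun hx ⟨m+1, by omega⟩
      rw [pm_rowmid n x (m+1) (by omega) (by omega)] at h0
      have h1 : x ⟨m+1+1, by omega⟩ = x ⟨m+1-1, by omega⟩ := zmod2_add_eq_zero (by simpa using h0)
      have e1 : (⟨m+1+1, by omega⟩ : Fin n) = ⟨m+2, hk⟩ := rfl
      have e2 : (⟨m+1-1, by omega⟩ : Fin n) = ⟨m, by omega⟩ := rfl
      rw [e1, e2] at h1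
      rw [h1]
      exact ih m (by omega) (by omega)

lemma pm_ones_mulVec (n : ℕ) (hn : 2 ≤ n) :
    (pm n).mulVec (fun _ => (1 : ZMod 2)) = 0 := by
  funext i
  obtain ⟨k, hk⟩ := i
  rcases eq_or_ne k 0 with rfl | h0
  · rw [pm_row0 n hn, Pi.zero_apply]; decide
  rcases eq_or_ne k (n - 1) with rfl | h1
  · rw [pm_rowlast n hn, Pi.zero_apply]; decide
  · rw [pm_rowmid n _ k (by omega) (by omega), Pi.zero_apply]; decide

lemma pm_ker (n : ℕ) (hn : 2 ≤ n) :
    LinearMap.ker (pm n).mulVecLin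
      = Submodule.span (ZMod 2) {(fun _ => 1 : Fin n → ZMod 2)} := by
  apply le_antisymm
  · intro x hx
    rw [LinearMap.mem_ker, Matrix.mulVecLin_apply] at hx
    rw [Submodule.mem_span_singleton]
    refine ⟨x ⟨0, by omega⟩, ?_⟩
    funext i
    have := pm_const_of_mulVec_zero n hn x hx i.val i.isLt
    rw [Fin.eta] at this
    simp [this]
  · rw [Submodule.span_le, Set.singleton_subset_iff]
    rw [SetLike.mem_coe, LinearMap.mem_ker, Matrix.mulVecLin_apply]
    exact pm_ones_mulVec n hn

lemma pm_rank (n : ℕ) (hn : 2 ≤ n) : (pm n).rank = n - 1 := by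
  have h1 := LinearMap.finrank_range_add_finrank_ker (pm n).mulVecLin
  have h2 : Module.finrank (ZMod 2) (LinearMap.ker (pm n).mulVecLin) = 1 := by
    rw [pm_ker n hn]
    refine finrank_span_singleton ?_
    intro h
    have := congrFun h ⟨0, by omega⟩
    exact one_ne_zero this
  rw [h2, Module.finrank_pi] at h1
  have : (pm n).rank = Module.finrank (ZMod 2) (LinearMap.range (pm n).mulVecLin) := rfl
  simp at h1
  omega

/-- For `n ≥ 2`, the adjacency matrix over GF(2) of the graft on the path `P_n`
whose mark set consists of the two leaves `v₁ = 0` and `vₙ = n-1` has rank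
`n - 1`; equivalently, its corank equals `1`. -/
theorem path_graft_leaves_matrix_rank (n : ℕ) (hn : 2 ≤ n) :
    let Γ : Graft (Fin n) := pathGraft n {⟨0, by omega⟩, ⟨n - 1, by omega⟩}
    Γ.matrix.rank = n - 1 ∧ Γ.corank = 1 := by
  intro Γ
  let e : (↥((pathGraft n {⟨0, by omega⟩, ⟨n - 1, by omega⟩}).support)) ≃ Fin n :=
    ⟨fun x => x.1, fun x => ⟨x, Finset.mem_univ x⟩, fun _ => rfl, fun _ => rfl⟩
  have hmat : Γ.matrix = (pm n).submatrix e e := by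
    ext u w
    simp only [Γ, e, Graft.matrix, pm, Matrix.submatrix_apply, Equiv.coe_fn_mk, pathGraft,
      SimpleGraph.pathGraph_adj, Finset.mem_insert, Finset.mem_singleton, Fin.ext_iff]
    simp only [Matrix.submatrix, Matrix.of_apply, pm, Fin.ext_iff]
    rfl
  have hr : Γ.matrix.rank = n - 1 := by
    rw [hmat, Matrix.rank_submatrix, pm_rank n hn]
  refine ⟨hr, ?_⟩
  have hcard : Γ.support.card = n := by
    simp [Γ, pathGraft]
  rw [Graft.corank, hr, hcard]
  omega
end

section
/- Let G be a simple graph on n ≥ 4 vertices with a vertex v adjacent to every other vertex of G, and suppose the local complementation deletion G ⊟ v is a path. Then there exists a vertex u ≠ v of G, namely any vertex of degree 2 in the path G ⊟ v, such that the local complementation deletion G ⊟ u contains three pairwise adjacent vertices (a triangle); in particular, G ⊟ u is not a path. -/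
open scoped Classical

/-- Local complementation deletion `G ⊟ v := (G * v) \ v`: perform local
complementation at `v` and then delete the vertex `v`. -/
def SimpleGraph.lcdSub {V : Type*} (G : SimpleGraph V) (v : V) :
    SimpleGraph {u : V // u ≠ v} :=
  SimpleGraph.induce {u : V | u ≠ v} (G.localComp v)

/-- `G ⊟ u` contains three pairwise adjacent vertices (a triangle) and, in
particular, is not a path. -/
def LcdSubHasTriangleNotPath {V : Type*} (G : SimpleGraph V) (u : V) : Prop :=
  (∃ a b c : {w : V // w ≠ u}, a ≠ b ∧ a ≠ c ∧ b ≠ c ∧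
    (G.lcdSub u).Adj a b ∧ (G.lcdSub u).Adj a c ∧ (G.lcdSub u).Adj b c) ∧
  ¬ ∃ n, Nonempty (G.lcdSub u ≃g SimpleGraph.pathGraph n)

lemma lcdSub_adj_iff {V : Type*} (G : SimpleGraph V) (v : V) (a b : {u : V // u ≠ v}) :
    (G.lcdSub v).Adj a b ↔
      (a.1 ≠ b.1 ∧ Xor' (G.Adj a.1 b.1) (G.Adj v a.1 ∧ G.Adj v b.1)) :=
  Iff.rfl

lemma pathGraph_no_triangle {n : ℕ} {a b c : Fin n}
    (hab : (SimpleGraph.pathGraph n).Adj a b) (hac : (SimpleGraph.pathGraph n).Adj a c)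
    (hbc : (SimpleGraph.pathGraph n).Adj b c) : False := by
  rw [SimpleGraph.pathGraph_adj] at hab hac hbc
  omega

lemma iso_degree {V W : Type*} [Fintype V] [Fintype W] {A : SimpleGraph V} {B : SimpleGraph W}
    [DecidableRel A.Adj] [DecidableRel B.Adj] (f : A ≃g B) (a : V) :
    A.degree a = B.degree (f a) := by
  rw [← SimpleGraph.card_neighborSet_eq_degree, ← SimpleGraph.card_neighborSet_eq_degree]
  exact Fintype.card_congr (f.mapNeighborSet a)

/-- Case 2.1 of Theorem 3.3: let `G` be a simple graph on `n ≥ 4` vertices with a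
vertex `v` adjacent to every other vertex, and suppose `G ⊟ v` is a path.  Then
there is a vertex `u ≠ v` — namely, any vertex of degree `2` in the path
`G ⊟ v` — such that `G ⊟ u` contains a triangle; in particular `G ⊟ u` is not a
path. -/
theorem dominating_lcdSub_path_triangle {V : Type*} [Fintype V] [DecidableEq V]
    (G : SimpleGraph V) (hcard : 4 ≤ Fintype.card V)
    (v : V) (hdom : ∀ u, u ≠ v → G.Adj v u)
    (hpath : ∃ n, Nonempty (G.lcdSub v ≃g SimpleGraph.pathGraph n)) :
    (∃ u : V, u ≠ v ∧ LcdSubHasTriangleNotPath G u) ∧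
    (∀ u : {w : V // w ≠ v}, (G.lcdSub v).degree u = 2 →
      LcdSubHasTriangleNotPath G u.1) := by
  have key : ∀ u : {w : V // w ≠ v}, (G.lcdSub v).degree u = 2 →
      LcdSubHasTriangleNotPath G u.1 := by
    intro u hdeg
    obtain ⟨n, ⟨f⟩⟩ := hpath
    have h2 : ((G.lcdSub v).neighborFinset u).card = 2 := hdeg
    obtain ⟨x, y, hxy, hset⟩ := Finset.card_eq_two.mp h2
    have hx : (G.lcdSub v).Adj u x := by
      rw [← SimpleGraph.mem_neighborFinset, hset]; simp
    have hy : (G.lcdSub v).Adj u y := by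
      rw [← SimpleGraph.mem_neighborFinset, hset]; simp
    have hvx : G.Adj v x.1 := hdom x.1 x.2
    have hvy : G.Adj v y.1 := hdom y.1 y.2
    have hvu : G.Adj v u.1 := hdom u.1 u.2
    have hux : ¬ G.Adj u.1 x.1 := by
      have h := ((lcdSub_adj_iff G v u x).mp hx).2
      unfold Xor' Xor at h; tauto
    have huy : ¬ G.Adj u.1 y.1 := by
      have h := ((lcdSub_adj_iff G v u y).mp hy).2
      unfold Xor' Xor at h; tauto
    have hnxy : ¬ (G.lcdSub v).Adj x y := fun h =>
      pathGraph_no_triangle (f.map_adj_iff.mpr hx) (f.map_adj_iff.mpr hy)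
        (f.map_adj_iff.mpr h)
    have hxy1 : x.1 ≠ y.1 := fun h => hxy (Subtype.ext h)
    have hGxy : G.Adj x.1 y.1 := by
      by_contra h
      exact hnxy ⟨hxy1, Or.inr ⟨⟨hvx, hvy⟩, h⟩⟩
    have hvu' : v ≠ u.1 := fun h => u.2 h.symm
    have hxu : x.1 ≠ u.1 := fun h => hx.1 h.symm
    have hyu : y.1 ≠ u.1 := fun h => hy.1 h.symm
    set a : {w : V // w ≠ u.1} := ⟨v, hvu'⟩ with ha
    set b : {w : V // w ≠ u.1} := ⟨x.1, hxu⟩ with hb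
    set c : {w : V // w ≠ u.1} := ⟨y.1, hyu⟩ with hc
    have hab : (G.lcdSub u.1).Adj a b :=
      ⟨fun h => x.2 h.symm, Or.inl ⟨hvx, fun hcc => hux hcc.2⟩⟩
    have hac : (G.lcdSub u.1).Adj a c :=
      ⟨fun h => y.2 h.symm, Or.inl ⟨hvy, fun hcc => huy hcc.2⟩⟩
    have hbc : (G.lcdSub u.1).Adj b c :=
      ⟨hxy1, Or.inl ⟨hGxy, fun hcc => hux hcc.1⟩⟩
    have hne1 : a ≠ b := by
      rw [ha, hb]; simp only [ne_eq, Subtype.mk.injEq]; exact fun h => x.2 h.symm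
    have hne2 : a ≠ c := by
      rw [ha, hc]; simp only [ne_eq, Subtype.mk.injEq]; exact fun h => y.2 h.symm
    have hne3 : b ≠ c := by
      rw [hb, hc]; simp only [ne_eq, Subtype.mk.injEq]; exact hxy1
    constructor
    · exact ⟨a, b, c, hne1, hne2, hne3, hab, hac, hbc⟩
    · rintro ⟨m, ⟨g⟩⟩
      exact pathGraph_no_triangle (g.map_adj_iff.mpr hab) (g.map_adj_iff.mpr hac)
        (g.map_adj_iff.mpr hbc)
  refine ⟨?_, key⟩
  obtain ⟨n, ⟨f⟩⟩ := id hpath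
  have hcn : Fintype.card {u : V // u ≠ v} = n := by
    rw [← Fintype.card_fin n]; exact Fintype.card_congr f.toEquiv
  have hcV : Fintype.card {u : V // u ≠ v} = Fintype.card V - 1 := by
    have := Fintype.card_subtype_compl (fun u : V => u = v)
    simp only [Fintype.card_subtype_eq] at this
    exact this
  have hn : 3 ≤ n := by omega
  set i1 : Fin n := ⟨1, by omega⟩ with hi1
  set u := f.symm i1 with hu
  have hdeg : (G.lcdSub v).degree u = 2 := by
    rw [iso_degree f u]
    have hfu : f u = i1 := f.apply_symm_apply i1
    rw [hfu]
    have hns : (SimpleGraph.pathGraph n).neighborFinset i1 =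
        {⟨0, by omega⟩, ⟨2, by omega⟩} := by
      ext w
      simp only [SimpleGraph.mem_neighborFinset, SimpleGraph.pathGraph_adj,
        Finset.mem_insert, Finset.mem_singleton, Fin.ext_iff, hi1]
      omega
    rw [SimpleGraph.degree, hns,
      Finset.card_insert_of_notMem (by simp [Fin.ext_iff]), Finset.card_singleton]
  exact ⟨u.1, u.2, key u hdeg⟩
end
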